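/- Let p ≥ 5 be prime and f a polynomial with coefficients in ℤ_p. Then (ℤ_p, f) is minimal if and only if the induced map f_{/2} on ℤ/p²ℤ is minimal (has a full cycle of length p²). -/

import Mathlib

open Polynomial Finset PadicInt

namespace Stmt15Aux

variable {p : ℕ} [hp : Fact p.Prime]

lemma unit_iff_not_dvd (c : ℤ_[p]) : IsUnit c ↔ ¬ (p:ℤ_[p]) ∣ c := by
  rw [← IsLocalRing.notMem_maximalIdeal, PadicInt.maximalIdeal_eq_span_p,
    Ideal.mem_span_singleton]

lemma pi_eq_iff_dvd (n : ℕ) (a b : ℤ_[p]) :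
    PadicInt.toZModPow n a = PadicInt.toZModPow n b ↔ (p:ℤ_[p])^n ∣ a - b := by
  rw [← sub_eq_zero, ← map_sub, ← RingHom.mem_ker, PadicInt.ker_toZModPow,
    Ideal.mem_span_singleton]

lemma zmod1_eq_iff_dvd (a b : ℤ_[p]) :
    PadicInt.toZMod a = PadicInt.toZMod b ↔ (p:ℤ_[p]) ∣ a - b := by
  rw [← sub_eq_zero, ← map_sub, ← RingHom.mem_ker, PadicInt.ker_toZMod,
    PadicInt.maximalIdeal_eq_span_p, Ideal.mem_span_singleton]

lemma lift_exists (n : ℕ) (b : ZMod (p^n)) : ∃ w : ℤ_[p], PadicInt.toZModPow n w = b := by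
  haveI : NeZero (p^n) := ⟨pow_ne_zero _ hp.1.ne_zero⟩
  exact ⟨((b.val : ℕ) : ℤ_[p]), by rw [map_natCast]; exact ZMod.natCast_rightInverse b⟩

lemma cubic (G : Polynomial ℤ_[p]) (z u : ℤ_[p]) :
    ∃ k, G.eval (z + u) = G.eval z + G.derivative.eval z * u
      + (G.hasseDeriv 2).eval z * u^2 + u^3 * k := by
  set T := Polynomial.taylor z G with hT
  have h1 : G.eval (z + u) = T.eval u := by
    rw [hT, Polynomial.taylor_eval, add_comm]
  have hdvd : (X:ℤ_[p][X])^3 ∣ T - (C (T.coeff 0) + C (T.coeff 1) * X + C (T.coeff 2) * X^2) := by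
    rw [Polynomial.X_pow_dvd_iff]
    intro d hd
    interval_cases d <;>
      simp [coeff_sub, coeff_add, coeff_C, coeff_C_mul, coeff_X_pow]
  obtain ⟨E, hE⟩ := hdvd
  refine ⟨E.eval u, ?_⟩
  have := congrArg (Polynomial.eval u) hE
  simp only [eval_sub, eval_add, eval_mul, eval_pow, eval_C, eval_X] at this
  have h0 : T.coeff 0 = G.eval z := Polynomial.taylor_coeff_zero z G
  have h1' : T.coeff 1 = G.derivative.eval z := Polynomial.taylor_coeff_one z G
  have h2 : T.coeff 2 = (G.hasseDeriv 2).eval z := Polynomial.taylor_coeff (r := z) (f := G) 2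
  rw [h1]
  rw [h0, h1', h2] at this
  linear_combination this




noncomputable def Aprod (F : Polynomial ℤ_[p]) (m : ℕ) (y : ℤ_[p]) : ℤ_[p] :=
  ∏ i ∈ Finset.range m, F.derivative.eval (F.eval^[i] y)

lemma aprod_zero (F : Polynomial ℤ_[p]) (y : ℤ_[p]) : Aprod F 0 y = 1 := by
  simp [Aprod]

lemma aprod_succ (F : Polynomial ℤ_[p]) (m : ℕ) (y : ℤ_[p]) :
    Aprod F (m+1) y = Aprod F m y * F.derivative.eval (F.eval^[m] y) := by
  simp [Aprod, Finset.prod_range_succ]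

lemma aprod_add (F : Polynomial ℤ_[p]) (m1 m2 : ℕ) (y : ℤ_[p]) :
    Aprod F (m1 + m2) y = Aprod F m1 y * Aprod F m2 (F.eval^[m1] y) := by
  rw [Aprod, Aprod, Aprod, Finset.prod_range_add]
  congr 1
  apply Finset.prod_congr rfl
  intro i _
  rw [← Function.iterate_add_apply]
  ring_nf

lemma cong (F : Polynomial ℤ_[p]) (c z w : ℤ_[p]) (h : c ∣ z - w) (t : ℕ) :
    c ∣ F.eval^[t] z - F.eval^[t] w := by
  induction t with
  | zero => simpa using h
  | succ t ih =>
    rw [Function.iterate_succ_apply', Function.iterate_succ_apply']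
    exact dvd_trans ih (Polynomial.sub_dvd_eval_sub _ _ F)

/-- Second-order iteration expansion. -/
lemma iter2 (F : Polynomial ℤ_[p]) (m : ℕ) (y : ℤ_[p]) :
    ∃ q : ℤ_[p], ∀ s : ℤ_[p], ∃ e : ℤ_[p],
      F.eval^[m] (y + s) = F.eval^[m] y + s * Aprod F m y + s^2 * q + s^3 * e := by
  induction m with
  | zero =>
    exact ⟨0, fun s => ⟨0, by simp [aprod_zero]⟩⟩
  | succ m ih =>
    obtain ⟨q, hq⟩ := ih
    set z := F.eval^[m] y with hz
    set P := Aprod F m y with hP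
    refine ⟨q * F.derivative.eval z + P^2 * (F.hasseDeriv 2).eval z, fun s => ?_⟩
    obtain ⟨e, he⟩ := hq s
    set u := s * P + s^2 * q + s^3 * e with hu
    obtain ⟨k, hk⟩ := cubic F z u
    refine ⟨e * F.derivative.eval z
      + (2*P*q + s*(q^2 + 2*P*e) + 2*s^2*q*e + s^3*e^2) * (F.hasseDeriv 2).eval z
      + (P + s*q + s^2*e)^3 * k, ?_⟩
    rw [Function.iterate_succ_apply', Function.iterate_succ_apply', he, ← hz]
    have : z + s * P + s ^ 2 * q + s ^ 3 * e = z + u := by rw [hu]; ring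
    rw [this, hk, aprod_succ, ← hP, ← hz]
    ring


lemma reduce_dvd (F : Polynomial ℤ_[p]) (c y : ℤ_[p]) (m : ℕ)
    (h : c ∣ F.eval^[m] y - y) (k : ℕ) :
    c ∣ F.eval^[k] y - F.eval^[k % m] y := by
  have key : ∀ q r : ℕ, c ∣ F.eval^[m*q + r] y - F.eval^[r] y := by
    intro q r
    induction q with
    | zero => simp
    | succ q ih =>
      have h1 : m*(q+1) + r = (m*q + r) + m := by ring
      rw [h1, Function.iterate_add_apply]
      have h2 := cong F c (F.eval^[m] y) y h (m*q + r)
      have h3 := dvd_add h2 ih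
      rwa [sub_add_sub_cancel] at h3
  have := key (k / m) (k % m)
  rwa [Nat.div_add_mod k m] at this

section Cov
variable (F : Polynomial ℤ_[p])
variable (hcov : ∀ y : ℤ_[p], ∀ b : ZMod (p^2), ∃ k, PadicInt.toZModPow 2 (F.eval^[k] y) = b)

include hcov

/-- Nothing is fixed mod p² by the p-th iterate. -/
lemma contra (z : ℤ_[p]) (h : (p:ℤ_[p])^2 ∣ F.eval^[p] z - z) : False := by
  haveI : NeZero (p^2) := ⟨pow_ne_zero _ hp.1.ne_zero⟩
  have hsurj : Function.Surjective (fun s : Fin p => PadicInt.toZModPow 2 (F.eval^[(s:ℕ)] z)) := by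
    intro b
    obtain ⟨k, hk⟩ := hcov z b
    have hp0 : 0 < p := hp.1.pos
    refine ⟨⟨k % p, Nat.mod_lt _ hp0⟩, ?_⟩
    have := reduce_dvd F ((p:ℤ_[p])^2) z p h k
    have heq : PadicInt.toZModPow 2 (F.eval^[k] z) = PadicInt.toZModPow 2 (F.eval^[k % p] z) :=
      (pi_eq_iff_dvd 2 _ _).mpr this
    simp only [← heq, hk]
  have hcard := Fintype.card_le_of_surjective _ hsurj
  simp only [Fintype.card_fin, ZMod.card] at hcard
  have h2 := hp.1.two_le
  nlinarith

lemma cov1 (y : ℤ_[p]) (b : ZMod p) : ∃ k, PadicInt.toZMod (F.eval^[k] y) = b := by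
  haveI : NeZero p := ⟨hp.1.ne_zero⟩
  obtain ⟨k, hk⟩ := hcov y (PadicInt.toZModPow 2 ((b.val : ℕ) : ℤ_[p]))
  refine ⟨k, ?_⟩
  have hdvd : (p:ℤ_[p])^2 ∣ F.eval^[k] y - ((b.val : ℕ) : ℤ_[p]) := (pi_eq_iff_dvd 2 _ _).mp hk
  have hdvd1 : (p:ℤ_[p]) ∣ F.eval^[k] y - ((b.val : ℕ) : ℤ_[p]) :=
    dvd_trans (dvd_pow_self _ two_ne_zero) hdvd
  have := (zmod1_eq_iff_dvd _ _).mpr hdvd1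
  rw [this, map_natCast]
  exact ZMod.natCast_rightInverse b

lemma ret (y : ℤ_[p]) : ∃ m, 0 < m ∧ PadicInt.toZModPow 2 (F.eval^[m] y) = PadicInt.toZModPow 2 y := by
  obtain ⟨k, hk⟩ := hcov (F.eval y) (PadicInt.toZModPow 2 y)
  refine ⟨k + 1, Nat.succ_pos _, ?_⟩
  rw [← hk, Function.iterate_succ_apply]

end Cov

section Cov2
variable (F : Polynomial ℤ_[p])
variable (hcov : ∀ y : ℤ_[p], ∀ b : ZMod (p^2), ∃ k, PadicInt.toZModPow 2 (F.eval^[k] y) = b)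
include hcov

lemma period1 (y : ℤ_[p]) : (p:ℤ_[p]) ∣ F.eval^[p] y - y := by
  haveI : NeZero p := ⟨hp.1.ne_zero⟩
  set P : ℕ → Prop := fun m => 0 < m ∧ PadicInt.toZMod (F.eval^[m] y) = PadicInt.toZMod y with hPdef
  haveI := Classical.decPred P
  have hP : ∃ m, P m := by
    obtain ⟨m, hm, heq⟩ := ret F hcov y
    refine ⟨m, hm, ?_⟩
    have := (pi_eq_iff_dvd 2 _ _).mp heq
    exact (zmod1_eq_iff_dvd _ _).mpr (dvd_trans (dvd_pow_self _ two_ne_zero) this)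
  set d := Nat.find hP with hd
  obtain ⟨hdpos, hdeq⟩ : P d := Nat.find_spec hP
  have hddvd : (p:ℤ_[p]) ∣ F.eval^[d] y - y := (zmod1_eq_iff_dvd _ _).mp hdeq
  have helper : ∀ s s' : ℕ, s < s' → s' < d →
      PadicInt.toZMod (F.eval^[s] y) = PadicInt.toZMod (F.eval^[s'] y) → False := by
    intro s s' hss hs'd heq
    have h1 : (p:ℤ_[p]) ∣ F.eval^[s'] y - F.eval^[s] y := (zmod1_eq_iff_dvd _ _).mp heq.symm
    have h2 := cong F (p:ℤ_[p]) _ _ h1 (d - s')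
    rw [← Function.iterate_add_apply, ← Function.iterate_add_apply,
      Nat.sub_add_cancel (le_of_lt hs'd)] at h2
    have h3 : (p:ℤ_[p]) ∣ F.eval^[d - s' + s] y - y := by
      have := dvd_sub hddvd h2
      have h4 : F.eval^[d] y - y - (F.eval^[d] y - F.eval^[d - s' + s] y)
          = F.eval^[d - s' + s] y - y := by ring
      rwa [h4] at this
    have hm' : d - s' + s < d := by omega
    have hm'pos : 0 < d - s' + s := by omega
    exact Nat.find_min hP hm' ⟨hm'pos, (zmod1_eq_iff_dvd _ _).mpr (by simpa using h3)⟩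
  have hinj : Function.Injective (fun s : Fin d => PadicInt.toZMod (F.eval^[(s:ℕ)] y)) := by
    intro s s' heq
    rcases lt_trichotomy (s:ℕ) (s':ℕ) with h | h | h
    · exact absurd (helper s s' h s'.2 heq) not_false
    · exact Fin.ext h
    · exact absurd (helper s' s h s.2 heq.symm) not_false
  have hsurj : Function.Surjective (fun s : Fin d => PadicInt.toZMod (F.eval^[(s:ℕ)] y)) := by
    intro b
    obtain ⟨k, hk⟩ := cov1 F hcov y b
    refine ⟨⟨k % d, Nat.mod_lt _ hdpos⟩, ?_⟩
    have := reduce_dvd F (p:ℤ_[p]) y d hddvd k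
    have heq := (zmod1_eq_iff_dvd _ _).mpr this
    simp only [← heq, hk]
  have hle := Fintype.card_le_of_injective _ hinj
  have hge := Fintype.card_le_of_surjective _ hsurj
  simp only [Fintype.card_fin, ZMod.card] at hle hge
  have up : d = p := le_antisymm hle hge
  rwa [up] at hddvd

lemma unit1 (y : ℤ_[p]) : ∃ c, IsUnit c ∧ F.eval^[p] y = y + (p:ℤ_[p]) * c := by
  obtain ⟨c, hc⟩ := period1 F hcov y
  refine ⟨c, ?_, by rw [← hc]; ring⟩
  by_contra hnc
  have hdc : (p:ℤ_[p]) ∣ c := by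
    by_contra h
    exact hnc ((unit_iff_not_dvd c).mpr h)
  obtain ⟨w, hw⟩ := hdc
  exact contra F hcov y ⟨w, by rw [hc, hw]; ring⟩

lemma aone1 (y : ℤ_[p]) : ∃ a, Aprod F p y = 1 + (p:ℤ_[p]) * a := by
  suffices h : (p:ℤ_[p]) ∣ Aprod F p y - 1 by
    obtain ⟨a, ha⟩ := h
    exact ⟨a, by linear_combination ha⟩
  by_contra hnd
  set A := Aprod F p y with hA
  have hAne : PadicInt.toZMod A ≠ 1 := by
    intro h
    exact hnd ((zmod1_eq_iff_dvd A 1).mp (by rw [h, map_one]))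
  obtain ⟨c, hc⟩ := period1 F hcov y
  haveI : NeZero p := ⟨hp.1.ne_zero⟩
  set tb : ZMod p := PadicInt.toZMod c * (1 - PadicInt.toZMod A)⁻¹ with htb
  set t : ℤ_[p] := ((tb.val : ℕ) : ℤ_[p]) with ht
  have htt : PadicInt.toZMod t = tb := by
    rw [ht, map_natCast]; exact ZMod.natCast_rightInverse tb
  have hw : (p:ℤ_[p]) ∣ c - t * (1 - A) := by
    rw [← zmod1_eq_iff_dvd c (t * (1 - A))]
    have hne : (1 : ZMod p) - PadicInt.toZMod A ≠ 0 := by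
      intro h
      exact hAne (by linear_combination -h)
    rw [map_mul, htt, htb, map_sub, map_one]
    field_simp
  obtain ⟨w, hww⟩ := hw
  obtain ⟨q, hq⟩ := iter2 F p y
  obtain ⟨e, he⟩ := hq ((p:ℤ_[p]) * t)
  refine contra F hcov (y + (p:ℤ_[p]) * t) ⟨w + t^2*q + (p:ℤ_[p])*t^3*e, ?_⟩
  rw [he, ← hA]
  have hfy : F.eval^[p] y = y + (p:ℤ_[p]) * c := by rw [← hc]; ring
  rw [hfy]
  linear_combination ((p:ℤ_[p])) * hww
end Cov2

lemma nat_unit (m : ℕ) (h : ¬ p ∣ m) : IsUnit ((m:ℕ) : ℤ_[p]) := by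
  rw [unit_iff_not_dvd]
  intro hd
  apply h
  have h0 : PadicInt.toZMod ((m:ℕ) : ℤ_[p]) = PadicInt.toZMod 0 :=
    (zmod1_eq_iff_dvd _ _).mpr (by simpa using hd)
  rw [map_natCast, map_zero] at h0
  exact (ZMod.natCast_eq_zero_iff m p).mp h0

lemma cast_sum_id (n : ℕ) : ((∑ i ∈ Finset.range n, i : ℕ) : ℤ_[p]) * 2 = n * ((n:ℤ_[p]) - 1) := by
  induction n with
  | zero => simp
  | succ n ih =>
    rw [Finset.sum_range_succ]
    push_cast
    push_cast at ih
    linear_combination ih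

lemma cast_sum_sq (n : ℕ) :
    ((∑ i ∈ Finset.range n, i^2 : ℕ) : ℤ_[p]) * 6 = n * ((n:ℤ_[p]) - 1) * (2*n - 1) := by
  induction n with
  | zero => simp
  | succ n ih =>
    rw [Finset.sum_range_succ]
    push_cast
    push_cast at ih
    linear_combination ih

lemma gauss2 (hp5 : 5 ≤ p) : ∃ g : ℤ_[p], ((∑ i ∈ Finset.range p, i : ℕ) : ℤ_[p]) = p * g := by
  have h2 : IsUnit ((2:ℕ) : ℤ_[p]) := nat_unit 2 (fun hd => by
    have := Nat.le_of_dvd (by norm_num) hd; omega)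
  obtain ⟨w, hw⟩ := isUnit_iff_exists_inv.mp h2
  push_cast at hw
  refine ⟨((p:ℤ_[p]) - 1) * w, ?_⟩
  have h := cast_sum_id (p := p) p
  linear_combination w * h - ((∑ i ∈ Finset.range p, i : ℕ) : ℤ_[p]) * hw

lemma gauss6 (hp5 : 5 ≤ p) : ∃ g : ℤ_[p], ((∑ i ∈ Finset.range p, i^2 : ℕ) : ℤ_[p]) = p * g := by
  have h6 : IsUnit ((6:ℕ) : ℤ_[p]) := nat_unit 6 (fun hd => by
    have hb := Nat.le_of_dvd (by norm_num) hd
    interval_cases p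
    · exact absurd hd (by norm_num)
    · exact absurd hp.1 (by norm_num))
  obtain ⟨w, hw⟩ := isUnit_iff_exists_inv.mp h6
  push_cast at hw
  refine ⟨((p:ℤ_[p]) - 1) * (2*(p:ℤ_[p]) - 1) * w, ?_⟩
  have h := cast_sum_sq (p := p) p
  linear_combination w * h - ((∑ i ∈ Finset.range p, i^2 : ℕ) : ℤ_[p]) * hw

lemma step_orbit (F : Polynomial ℤ_[p]) (k : ℕ) (y c a q : ℤ_[p])
    (hc : F.eval^[p^(k+1)] y = y + (p:ℤ_[p])^(k+1) * c)
    (hA : Aprod F (p^(k+1)) y = 1 + (p:ℤ_[p]) * a)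
    (hq : ∀ s, ∃ e, F.eval^[p^(k+1)] (y + s) = F.eval^[p^(k+1)] y
      + s * Aprod F (p^(k+1)) y + s^2*q + s^3*e) :
    ∀ j : ℕ, ∃ u v, F.eval^[p^(k+1) * j] y
        = y + (p:ℤ_[p])^(k+1) * ((j:ℤ_[p])*c + (p:ℤ_[p])*u)
      ∧ u = a*c*((∑ i ∈ Finset.range j, i : ℕ):ℤ_[p])
          + q*c^2*((∑ i ∈ Finset.range j, i^2 : ℕ):ℤ_[p])*(p:ℤ_[p])^k + (p:ℤ_[p])*v := by
  intro j
  induction j with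
  | zero => exact ⟨0, 0, by simp, by simp⟩
  | succ j ih =>
    obtain ⟨u, v, hx, hu⟩ := ih
    set t : ℤ_[p] := (j:ℤ_[p])*c + (p:ℤ_[p])*u with hts
    obtain ⟨e, he⟩ := hq ((p:ℤ_[p])^(k+1) * t)
    set G : ℤ_[p] := ((∑ i ∈ Finset.range j, i : ℕ):ℤ_[p]) with hG
    set H : ℤ_[p] := ((∑ i ∈ Finset.range j, i^2 : ℕ):ℤ_[p]) with hH
    set v' : ℤ_[p] := v + a*u + (p:ℤ_[p])^k*q*(2*(j:ℤ_[p])*c*u + (p:ℤ_[p])*u^2)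
      + (p:ℤ_[p])^k*(p:ℤ_[p])^k*t^3*e with hv'
    refine ⟨a*c*(G + (j:ℤ_[p])) + q*c^2*(H + (j:ℤ_[p])^2)*(p:ℤ_[p])^k + (p:ℤ_[p])*v', v', ?_, ?_⟩
    · have hiter : p^(k+1) * (j+1) = p^(k+1) + p^(k+1) * j := by ring
      rw [hiter, Function.iterate_add_apply, hx, he, hc, hA]
      simp only [hv', hts, hu]
      push_cast
      simp only [pow_succ]
      ring
    · rw [Finset.sum_range_succ, Finset.sum_range_succ, Nat.cast_add, Nat.cast_add,
        Nat.cast_pow, ← hG, ← hH]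

lemma unit_add_p (c w : ℤ_[p]) (h : IsUnit c) : IsUnit (c + (p:ℤ_[p])*w) := by
  rw [unit_iff_not_dvd] at h ⊢
  intro hd
  obtain ⟨m, hm⟩ := hd
  exact h ⟨m - w, by linear_combination hm⟩

lemma toZMod_ne_zero_of_unit (c : ℤ_[p]) (h : IsUnit c) : PadicInt.toZMod c ≠ 0 := by
  intro h0
  rw [unit_iff_not_dvd] at h
  apply h
  have := (zmod1_eq_iff_dvd c 0).mp (by rw [h0, map_zero])
  simpa using this

lemma inv_all (hp5 : 5 ≤ p) (F : Polynomial ℤ_[p])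
    (hcov : ∀ y : ℤ_[p], ∀ b : ZMod (p^2), ∃ k, PadicInt.toZModPow 2 (F.eval^[k] y) = b)
    (n : ℕ) (hn : 1 ≤ n) : ∀ y : ℤ_[p],
      (∀ b : ZMod (p^n), ∃ k, PadicInt.toZModPow n (F.eval^[k] y) = b) ∧
      (∃ c, IsUnit c ∧ F.eval^[p^n] y = y + (p:ℤ_[p])^n * c) ∧
      (∃ a, Aprod F (p^n) y = 1 + (p:ℤ_[p]) * a) := by
  induction n, hn using Nat.le_induction with
  | base =>
    intro y
    refine ⟨?_, ?_, ?_⟩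
    · intro b
      obtain ⟨w, hw⟩ := lift_exists 1 b
      obtain ⟨k, hk⟩ := hcov y (PadicInt.toZModPow 2 w)
      refine ⟨k, ?_⟩
      have h2 : (p:ℤ_[p])^2 ∣ F.eval^[k] y - w := (pi_eq_iff_dvd 2 _ _).mp hk
      have h1 : (p:ℤ_[p])^1 ∣ F.eval^[k] y - w := dvd_trans (pow_dvd_pow _ one_le_two) h2
      rw [(pi_eq_iff_dvd 1 _ _).mpr h1, hw]
    · simpa [pow_one] using unit1 F hcov y
    · simpa [pow_one] using aone1 F hcov y
  | succ n hn1 ih =>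
    obtain ⟨k0, rfl⟩ : ∃ k0, n = k0 + 1 := ⟨n - 1, by omega⟩
    have hstep : ∀ z : ℤ_[p], ∃ c : ℤ_[p], IsUnit c ∧
        (∀ j : ℕ, ∃ u, F.eval^[p^(k0+1) * j] z
          = z + (p:ℤ_[p])^(k0+1) * ((j:ℤ_[p])*c + (p:ℤ_[p])*u)) ∧
        (∃ w, F.eval^[p^(k0+1+1)] z = z + (p:ℤ_[p])^(k0+1+1) * (c + (p:ℤ_[p])*w)) := by
      intro z
      obtain ⟨-, ⟨c, hcu, hc⟩, ⟨a, ha⟩⟩ := ih z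
      obtain ⟨q, hq⟩ := iter2 F (p^(k0+1)) z
      have S := step_orbit F k0 z c a q hc ha hq
      refine ⟨c, hcu, fun j => by obtain ⟨u, v, h1, _⟩ := S j; exact ⟨u, h1⟩, ?_⟩
      obtain ⟨u, v, h1, h2⟩ := S p
      obtain ⟨g2, hg2⟩ := gauss2 hp5
      obtain ⟨g6, hg6⟩ := gauss6 hp5
      refine ⟨a*c*g2 + q*c^2*g6*(p:ℤ_[p])^k0 + v, ?_⟩
      have hexp : p^(k0+1+1) = p^(k0+1) * p := by ring
      rw [hexp, h1, h2, hg2, hg6]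
      simp only [pow_succ]
      ring
    intro y
    refine ⟨?_, ?_, ?_⟩
    · -- coverage at n+1
      intro b
      haveI : NeZero p := ⟨hp.1.ne_zero⟩
      obtain ⟨w, hw⟩ := lift_exists (k0+1+1) b
      have hcast : PadicInt.toZModPow (k0+1) w
          = ZMod.castHom (pow_dvd_pow p (Nat.le_succ _)) (ZMod (p^(k0+1))) b := by
        rw [← hw]
        exact (RingHom.congr_fun
          (PadicInt.zmod_cast_comp_toZModPow (k0+1) (k0+1+1) (Nat.le_succ _)) w).symm
      obtain ⟨covy, -, -⟩ := ih y
      obtain ⟨k, hk⟩ := covy (ZMod.castHom (pow_dvd_pow p (Nat.le_succ _)) (ZMod (p^(k0+1))) b)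
      rw [← hcast] at hk
      obtain ⟨s, hs⟩ := (pi_eq_iff_dvd (k0+1) _ _).mp hk
      obtain ⟨c, hcu, horb, -⟩ := hstep (F.eval^[k] y)
      have hcb : PadicInt.toZMod c ≠ 0 := toZMod_ne_zero_of_unit c hcu
      set jb : ZMod p := (-(PadicInt.toZMod s)) * (PadicInt.toZMod c)⁻¹ with hjb
      set j : ℕ := jb.val with hj
      obtain ⟨u, hu⟩ := horb j
      have hdiv : (p:ℤ_[p]) ∣ (s + (j:ℤ_[p])*c) := by
        have heq : PadicInt.toZMod (s + (j:ℤ_[p])*c) = PadicInt.toZMod 0 := by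
          rw [map_zero, map_add, map_mul, map_natCast]
          have hjv : ((j:ℕ) : ZMod p) = jb := ZMod.natCast_rightInverse jb
          rw [hjv, hjb]
          field_simp
          ring
        simpa using (zmod1_eq_iff_dvd _ _).mp heq
      obtain ⟨m, hm⟩ := hdiv
      refine ⟨p^(k0+1)*j + k, ?_⟩
      rw [Function.iterate_add_apply, ← hw, pi_eq_iff_dvd]
      refine ⟨m + u, ?_⟩
      rw [hu]
      simp only [pow_succ]
      linear_combination hs + (p:ℤ_[p])^(k0+1)*hm
    · -- unit at n+1
      obtain ⟨c, hcu, -, ⟨w, hw⟩⟩ := hstep y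
      exact ⟨c + (p:ℤ_[p])*w, unit_add_p c w hcu, hw⟩
    · -- Aprod at n+1
      have haux : ∀ j : ℕ, ∃ a', Aprod F (p^(k0+1) * j) y = 1 + (p:ℤ_[p]) * a' := by
        intro j
        induction j with
        | zero => simp [aprod_zero]
        | succ j ihj =>
          obtain ⟨a', ha'⟩ := ihj
          obtain ⟨-, -, a2, ha2⟩ := ih (F.eval^[p^(k0+1)*j] y)
          refine ⟨a' + a2 + (p:ℤ_[p])*a'*a2, ?_⟩
          have hh : p^(k0+1)*(j+1) = p^(k0+1)*j + p^(k0+1) := by ring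
          rw [hh, aprod_add, ha', ha2]
          ring
      have := haux p
      rwa [← pow_succ] at this

lemma it_comm (F : Polynomial ℤ_[p]) (g : ZMod (p^2) → ZMod (p^2))
    (hg : ∀ x : ℤ_[p], g (PadicInt.toZModPow 2 x) = PadicInt.toZModPow 2 (F.eval x)) :
    ∀ (k : ℕ) (x : ℤ_[p]),
      g^[k] (PadicInt.toZModPow 2 x) = PadicInt.toZModPow 2 (F.eval^[k] x) := by
  intro k
  induction k with
  | zero => intro x; rfl
  | succ k ih =>
    intro x
    rw [Function.iterate_succ_apply, Function.iterate_succ_apply, hg, ih]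

noncomputable def g2 (F : Polynomial ℤ_[p]) : ZMod (p^2) → ZMod (p^2) :=
  fun a => PadicInt.toZModPow 2 (F.eval ((a.val : ℕ) : ℤ_[p]))

lemma g2_comm (F : Polynomial ℤ_[p]) :
    ∀ x : ℤ_[p], g2 F (PadicInt.toZModPow 2 x) = PadicInt.toZModPow 2 (F.eval x) := by
  intro x
  haveI : NeZero (p^2) := ⟨pow_ne_zero _ hp.1.ne_zero⟩
  show PadicInt.toZModPow 2 (F.eval (((PadicInt.toZModPow 2 x).val : ℕ) : ℤ_[p]))
    = PadicInt.toZModPow 2 (F.eval x)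
  rw [pi_eq_iff_dvd]
  refine dvd_trans ?_ (Polynomial.sub_dvd_eval_sub _ _ F)
  rw [← pi_eq_iff_dvd, map_natCast]
  exact ZMod.natCast_rightInverse _

end Stmt15Aux

theorem stmt15 (p : ℕ) [Fact p.Prime] (hp5 : 5 ≤ p) (F : Polynomial ℤ_[p]) :
    (∀ x : ℤ_[p], Dense (Set.range fun k : ℕ => (fun t => F.eval t)^[k] x)) ↔
      ∀ g : ZMod (p ^ 2) → ZMod (p ^ 2),
        (∀ x : ℤ_[p], g (PadicInt.toZModPow 2 x) = PadicInt.toZModPow 2 (F.eval x)) →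
          ∀ a : ZMod (p ^ 2), Set.range (fun k : ℕ => g^[k] a) = Set.univ := by
  have hprime : p.Prime := Fact.out
  constructor
  · intro hL g hg a
    haveI : NeZero (p^2) := ⟨pow_ne_zero _ hprime.ne_zero⟩
    apply Set.eq_univ_of_forall
    intro b
    obtain ⟨x, hx⟩ := Stmt15Aux.lift_exists 2 a
    obtain ⟨w, hw⟩ := Stmt15Aux.lift_exists 2 b
    have hr : (0:ℝ) < (p:ℝ)^(-2 : ℤ) := by
      have hp0 : (0:ℝ) < (p:ℝ) := by exact_mod_cast hprime.pos
      positivity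
    obtain ⟨v, hvball, hvmem⟩ := Metric.dense_iff.mp (hL x) w ((p:ℝ)^(-2:ℤ)) hr
    obtain ⟨k, hk⟩ := hvmem
    rw [← hk] at hvball
    have h1 : ‖F.eval^[k] x - w‖ ≤ (p:ℝ)^(-(2:ℕ):ℤ) := by
      have := Metric.mem_ball.mp hvball
      rw [dist_eq_norm] at this
      exact le_of_lt (by exact_mod_cast this)
    have h3 := (PadicInt.norm_le_pow_iff_mem_span_pow _ 2).mp h1
    rw [Ideal.mem_span_singleton] at h3
    have h4 : PadicInt.toZModPow 2 (F.eval^[k] x) = PadicInt.toZModPow 2 w :=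
      (Stmt15Aux.pi_eq_iff_dvd 2 _ _).mpr h3
    refine ⟨k, ?_⟩
    show g^[k] a = b
    rw [← hx, Stmt15Aux.it_comm F g hg k x, h4, hw]
  · intro hR x
    have hcov : ∀ y : ℤ_[p], ∀ b : ZMod (p^2), ∃ k,
        PadicInt.toZModPow 2 (F.eval^[k] y) = b := by
      intro y b
      have h := hR (Stmt15Aux.g2 F) (Stmt15Aux.g2_comm F) (PadicInt.toZModPow 2 y)
      have hb : b ∈ Set.range (fun k : ℕ => (Stmt15Aux.g2 F)^[k] (PadicInt.toZModPow 2 y)) :=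
        h ▸ Set.mem_univ b
      obtain ⟨k, hk⟩ := hb
      exact ⟨k, by rw [← Stmt15Aux.it_comm F (Stmt15Aux.g2 F) (Stmt15Aux.g2_comm F) k y]; exact hk⟩
    rw [Metric.dense_iff]
    intro z r hr
    obtain ⟨N, hN⟩ := PadicInt.exists_pow_neg_lt p hr
    obtain ⟨k, hk⟩ := ((Stmt15Aux.inv_all hp5 F hcov (N+1) (by omega)) x).1
      (PadicInt.toZModPow (N+1) z)
    obtain ⟨s, hs⟩ := (Stmt15Aux.pi_eq_iff_dvd (N+1) _ _).mp hk
    refine ⟨F.eval^[k] x, ?_, ⟨k, rfl⟩⟩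
    rw [Metric.mem_ball, dist_eq_norm]
    have h1 : ‖F.eval^[k] x - z‖ ≤ (p:ℝ)^(-((N+1:ℕ)):ℤ) := by
      rw [PadicInt.norm_le_pow_iff_mem_span_pow, Ideal.mem_span_singleton]
      exact ⟨s, hs⟩
    refine lt_of_le_of_lt (le_trans h1 ?_) hN
    have hp1 : (1:ℝ) ≤ (p:ℝ) := by exact_mod_cast hprime.one_lt.le
    apply zpow_le_zpow_right₀ hp1
    omega
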